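/- arXiv:1409.6687 — 12 statements merged into one kernel-verified Lean document; each statement's English description precedes it below -/
import Mathlib

section
/- Let G be a finite set of monomials and let L₁, L₂ ⊆ G with lcm(L₁) = lcm(L₂). Then L₁ and L₂ contain exactly the same dominant monomials of G; that is, for every m ∈ G that is dominant with respect to G, m ∈ L₁ if and only if m ∈ L₂. -/
open Finset

variable {X : Type*} [DecidableEq X]

/-- The lcm of a finite set of monomials (monomials = finitely supported
exponent functions): pointwise maximum of exponents. -/
noncomputable def mlcm (L : Finset (X →₀ ℕ)) : X →₀ ℕ := L.sup id

/-- `m` is dominant with respect to `G`: some variable `x` appears in `m`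
with exponent at least `k > 0` while every other element of `G` has
`x`-exponent `< k`. -/
def Dominant (G : Finset (X →₀ ℕ)) (m : X →₀ ℕ) : Prop :=
  ∃ x : X, ∃ k : ℕ, 0 < k ∧ k ≤ m x ∧ ∀ m' ∈ G, m' ≠ m → m' x < k

/-- Total degree of a monomial: sum of its exponents. -/
def mdeg (m : X →₀ ℕ) : ℕ := m.sum fun _ e => e

lemma mlcm_apply (L : Finset (X →₀ ℕ)) (x : X) : mlcm L x = L.sup (fun m => m x) := by
  classical
  induction L using Finset.cons_induction with
  | empty => simp [mlcm]; rfl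
  | cons a s ha ih =>
    simp [mlcm, Finset.sup_cons, Finsupp.sup_apply] at *
    rw [ih]

theorem same_lcm_same_dominant (G L₁ L₂ : Finset (X →₀ ℕ)) (h1 : L₁ ⊆ G) (h2 : L₂ ⊆ G)
    (hlcm : mlcm L₁ = mlcm L₂) :
    ∀ m ∈ G, Dominant G m → (m ∈ L₁ ↔ m ∈ L₂) := by
  have key : ∀ (A B : Finset (X →₀ ℕ)), A ⊆ G → B ⊆ G → mlcm A = mlcm B →
      ∀ m ∈ G, Dominant G m → m ∈ A → m ∈ B := by
    intro A B hA hB hAB m hmG ⟨x, k, hk, hkm, hdom⟩ hmA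
    have h1 : k ≤ mlcm A x := by
      rw [mlcm_apply]
      exact le_trans hkm (Finset.le_sup (f := fun m => m x) hmA)
    rw [hAB, mlcm_apply] at h1
    obtain ⟨m', hm', hkm'⟩ := (Finset.le_sup_iff hk).mp h1
    by_cases hmm : m' = m
    · exact hmm ▸ hm'
    · exact absurd hkm' (not_le.mpr (hdom m' (hB hm') hmm))
  intro m hm hd
  exact ⟨key L₁ L₂ h1 h2 hlcm m hm hd, key L₂ L₁ h2 h1 hlcm.symm m hm hd⟩
end

section
/- Let G be a finite dominant set of monomials. Then for every subset L ⊊ G and every m ∈ G \ L, the total degree of lcm(L ∪ {m}) is at least the total degree of lcm(L) plus 1. -/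
open Finset

variable {X : Type*} [DecidableEq X]

lemma mdeg_lt_of_le_of_lt {f g : X →₀ ℕ} (hle : ∀ x, f x ≤ g x) {x : X}
    (hx : f x < g x) : mdeg f < mdeg g := by
  have hsub : f.support ⊆ g.support := fun y hy => by
    simp only [Finsupp.mem_support_iff] at *
    exact fun h => hy (Nat.le_antisymm (h ▸ hle y) (Nat.zero_le _))
  have hxg : x ∈ g.support := Finsupp.mem_support_iff.mpr (by omega)
  have h1 : mdeg f = ∑ y ∈ g.support, f y := by
    rw [mdeg, Finsupp.sum]
    exact Finset.sum_subset hsub (fun y _ hy => by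
      simpa [Finsupp.mem_support_iff] using hy)
  have h2 : mdeg g = ∑ y ∈ g.support, g y := rfl
  rw [h1, h2]
  exact Finset.sum_lt_sum (fun y _ => hle y) ⟨x, hxg, hx⟩

theorem mdeg_lcm_insert_of_dominant (G : Finset (X →₀ ℕ))
    (hdom : ∀ m ∈ G, Dominant G m)
    (L : Finset (X →₀ ℕ)) (hL : L ⊂ G) (m : X →₀ ℕ) (hm : m ∈ G) (hmL : m ∉ L) :
    mdeg (mlcm L) + 1 ≤ mdeg (mlcm (insert m L)) := by
  obtain ⟨x, k, hk0, hkm, hlt⟩ := hdom m hm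
  have hle : ∀ y, mlcm L y ≤ mlcm (insert m L) y := fun y => by
    have : mlcm L ≤ mlcm (insert m L) :=
      Finset.sup_mono (Finset.subset_insert _ _)
    exact this y
  have happ : ∀ (S : Finset (X →₀ ℕ)), (S.sup id) x = S.sup (fun f => f x) := by
    intro S
    induction S using Finset.induction_on with
    | empty => simp [Finsupp.bot_eq_zero]
    | insert a s ha ih => simp [Finsupp.sup_apply, ih]
  have hLx : mlcm L x < k := by
    rw [mlcm, happ]
    refine Finset.sup_lt_iff hk0 |>.mpr fun f hf => ?_
    exact hlt f (hL.subset hf) (fun h => hmL (h ▸ hf))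
  have hx : mlcm L x < mlcm (insert m L) x := by
    have : k ≤ mlcm (insert m L) x := by
      have hmem : m ∈ insert m L := Finset.mem_insert_self m L
      have : m ≤ (insert m L).sup id := Finset.le_sup (f := id) hmem
      exact Nat.le_trans hkm (this x)
    omega
  exact mdeg_lt_of_le_of_lt hle hx
end

section
/- Let l₁, …, l_q be monomials with pairwise disjoint supports (no variable appears in two of them), i.e., a monomial regular sequence, and let l be a monomial such that {l₁, …, l_q, l} is a minimal generating set (no element divides another). Then each l_i is dominant with respect to G = {l₁, …, l_q, l}. Consequently G has at most one nondominant element. -/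
open Finset

variable {X : Type*} [DecidableEq X]

theorem almost_complete_intersection_dominant (R : Finset (X →₀ ℕ)) (l : X →₀ ℕ)
    (hdisj : ∀ a ∈ R, ∀ b ∈ R, a ≠ b → ∀ x : X, a x = 0 ∨ b x = 0)
    (hl : l ∉ R)
    (G : Finset (X →₀ ℕ)) (hG : G = insert l R)
    (hmin : ∀ a ∈ G, ∀ b ∈ G, a ≠ b → ¬ a ≤ b) :
    ∀ m ∈ R, Dominant G m := by
  intro m hm
  have hmG : m ∈ G := by rw [hG]; exact mem_insert_of_mem hm
  have hlG : l ∈ G := by rw [hG]; exact mem_insert_self l R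
  have hml : m ≠ l := fun h => hl (h ▸ hm)
  have hnle : ¬ m ≤ l := hmin m hmG l hlG hml
  rw [Finsupp.le_iff] at hnle
  push_neg at hnle
  obtain ⟨x, -, hx⟩ := hnle
  refine ⟨x, m x, ?_, le_refl _, ?_⟩
  · exact lt_of_le_of_lt (Nat.zero_le _) hx
  · intro m' hm'G hne
    rw [hG, mem_insert] at hm'G
    rcases hm'G with rfl | hm'R
    · exact hx
    · rcases hdisj m' hm'R m hm hne x with h | h
      · rw [h]; exact lt_of_le_of_lt (Nat.zero_le _) hx
      · rw [h] at hx; exact absurd hx (by omega)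
end

section
/- Let G = {m₁, …, m_q, n} be a finite set of monomials where each m_i is dominant with respect to G and n is not dominant. If L₁, L₂ ⊆ G satisfy lcm(L₁) = lcm(L₂) and L₁ ≠ L₂, then one of L₁, L₂ is obtained from the other by inserting n; i.e., {L₁, L₂} = {L, L ∪ {n}} for some L ⊆ G with n ∉ L. -/
open Finset

variable {X : Type*} [DecidableEq X]

lemma dom_mem_iff {G : Finset (X →₀ ℕ)} {m : X →₀ ℕ} {x : X} {k : ℕ}
    (hk : 0 < k) (hkm : k ≤ m x) (hlt : ∀ m' ∈ G, m' ≠ m → m' x < k)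
    {L : Finset (X →₀ ℕ)} (hL : L ⊆ G) : m ∈ L ↔ k ≤ mlcm L x := by
  constructor
  · intro hm
    refine hkm.trans ?_
    rw [mlcm_apply]
    exact Finset.le_sup (f := fun m => m x) hm
  · intro h
    rw [mlcm_apply, Finset.le_sup_iff hk] at h
    obtain ⟨m', hm', hkm'⟩ := h
    by_contra hmm
    rcases eq_or_ne m' m with rfl | hne
    · exact hmm hm'
    · exact absurd hkm' (not_le.mpr (hlt m' (hL hm') hne))

theorem semidominant_same_lcm (G : Finset (X →₀ ℕ)) (n : X →₀ ℕ) (hn : n ∈ G)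
    (hnd : ¬ Dominant G n) (hdom : ∀ m ∈ G, m ≠ n → Dominant G m)
    (L₁ L₂ : Finset (X →₀ ℕ)) (h1 : L₁ ⊆ G) (h2 : L₂ ⊆ G)
    (hlcm : mlcm L₁ = mlcm L₂) (hne : L₁ ≠ L₂) :
    (n ∉ L₁ ∧ L₂ = insert n L₁) ∨ (n ∉ L₂ ∧ L₁ = insert n L₂) := by
  have key : ∀ m, m ≠ n → (m ∈ L₁ ↔ m ∈ L₂) := by
    intro m hmn
    constructor
    · intro h
      obtain ⟨x, k, hk, hkm, hlt⟩ := hdom m (h1 h) hmn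
      rw [dom_mem_iff hk hkm hlt h2, ← hlcm, ← dom_mem_iff hk hkm hlt h1]
      exact h
    · intro h
      obtain ⟨x, k, hk, hkm, hlt⟩ := hdom m (h2 h) hmn
      rw [dom_mem_iff hk hkm hlt h1, hlcm, ← dom_mem_iff hk hkm hlt h2]
      exact h
  by_cases hn1 : n ∈ L₁
  · by_cases hn2 : n ∈ L₂
    · exfalso; apply hne; ext m
      rcases eq_or_ne m n with rfl | hmn
      · simp [hn1, hn2]
      · exact key m hmn
    · right
      refine ⟨hn2, ?_⟩
      ext m
      rcases eq_or_ne m n with rfl | hmn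
      · simp [hn1]
      · simp [Finset.mem_insert, hmn, key m hmn]
  · left
    have hn2 : n ∈ L₂ := by
      by_contra hn2
      apply hne; ext m
      rcases eq_or_ne m n with rfl | hmn
      · simp [hn1, hn2]
      · exact key m hmn
    refine ⟨hn1, ?_⟩
    ext m
    rcases eq_or_ne m n with rfl | hmn
    · simp [hn2]
    · simp [Finset.mem_insert, hmn, (key m hmn).symm]
end

section
/- Let G = {m₁, …, m_q, n} be a semidominant set of monomials (each m_i dominant, n nondominant). Define A = {(σ ∪ {n}, σ) : σ ⊆ {m₁,…,m_q}, n divides lcm(σ)}. Then: (a) distinct pairs in A are disjoint (share no component); (b) for each (σ ∪ {n}, σ) ∈ A, lcm(σ ∪ {n}) = lcm(σ); and (c) every pair (σ, τ) of subsets of G with τ = σ \ {g} for some g ∈ σ and lcm(σ) = lcm(τ) belongs to A. -/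
open Finset

variable {X : Type*} [DecidableEq X]

theorem semidominant_pairs_A (G : Finset (X →₀ ℕ)) (n : X →₀ ℕ) (hn : n ∈ G)
    (hnd : ¬ Dominant G n) (hdom : ∀ m ∈ G, m ≠ n → Dominant G m) :
    (∀ σ ⊆ G.erase n, ∀ σ' ⊆ G.erase n, n ≤ mlcm σ → n ≤ mlcm σ' → σ ≠ σ' →
        insert n σ ≠ insert n σ' ∧ insert n σ ≠ σ' ∧ σ ≠ insert n σ') ∧
    (∀ σ ⊆ G.erase n, n ≤ mlcm σ → mlcm (insert n σ) = mlcm σ) ∧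
    (∀ σ ⊆ G, ∀ g ∈ σ, mlcm σ = mlcm (σ.erase g) →
        ∃ σ₀ ⊆ G.erase n, n ≤ mlcm σ₀ ∧ σ = insert n σ₀ ∧ σ.erase g = σ₀) := by
  classical
  refine ⟨?_, ?_, ?_⟩
  · intro σ hσ σ' hσ' _ _ hne
    have hnσ : n ∉ σ := fun h => (Finset.mem_erase.mp (hσ h)).1 rfl
    have hnσ' : n ∉ σ' := fun h => (Finset.mem_erase.mp (hσ' h)).1 rfl
    refine ⟨?_, ?_, ?_⟩
    · intro h
      apply hne
      have := congrArg (Finset.erase · n) h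
      simpa [Finset.erase_insert hnσ, Finset.erase_insert hnσ'] using this
    · intro h
      exact hnσ' (h ▸ Finset.mem_insert_self n σ)
    · intro h
      exact hnσ (h ▸ Finset.mem_insert_self n σ')
  · intro σ _ hle
    simp only [mlcm, Finset.sup_insert, id]
    exact sup_eq_right.mpr hle
  · intro σ hσ g hg heq
    have hgn : g = n := by
      by_contra hgn
      obtain ⟨x, k, hk0, hkg, hlt⟩ := hdom g (hσ hg) hgn
      have h1 : mlcm (σ.erase g) x < k := by
        rw [mlcm_apply]
        refine Finset.sup_lt_iff hk0 |>.mpr ?_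
        intro m hm
        have hm' := Finset.mem_erase.mp hm
        exact hlt m (hσ hm'.2) hm'.1
      have h2 : k ≤ mlcm σ x := le_trans hkg (by
        rw [mlcm_apply]; exact Finset.le_sup (f := fun m => m x) hg)
      rw [heq] at h2
      omega
    subst hgn
    refine ⟨σ.erase g, fun m hm => Finset.mem_erase.mpr ⟨(Finset.mem_erase.mp hm).1, hσ (Finset.mem_erase.mp hm).2⟩, ?_, ?_, rfl⟩
    · rw [← heq]
      exact le_trans (Finset.le_sup (f := id) hg) le_rfl
    · exact (Finset.insert_erase hg).symm
end

section
/- Let G = {m₁, …, m_q, n} be a semidominant set of monomials. Then the maximal cardinality r of a dominant subset of G containing n satisfies: for every subset L ⊆ {m₁,…,m_q} with |L| ≥ r, n divides lcm(L). -/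
open Finset

variable {X : Type*} [DecidableEq X]

theorem pd_semidominant (G : Finset (X →₀ ℕ)) (n : X →₀ ℕ) (hn : n ∈ G)
    (hnd : ¬ Dominant G n) (hdom : ∀ m ∈ G, m ≠ n → Dominant G m)
    (r : ℕ)
    (hub : ∀ D ⊆ G, n ∈ D → (∀ m ∈ D, Dominant D m) → D.card ≤ r)
    (hmax : ∃ D ⊆ G, n ∈ D ∧ (∀ m ∈ D, Dominant D m) ∧ D.card = r) :
    ∀ L ⊆ G.erase n, r ≤ L.card → n ≤ mlcm L := by
  intro L hL hcard
  by_contra hle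
  rw [Finsupp.le_def] at hle
  push_neg at hle
  obtain ⟨x, hx⟩ := hle
  have hmx : ∀ m ∈ L, m x < n x := by
    intro m hm
    calc m x ≤ (mlcm L) x := by
          exact (Finsupp.le_def.mp (Finset.le_sup (f := id) hm)) x
      _ < n x := hx
  have hnL : n ∉ L := fun h => (Finset.ne_of_mem_erase (hL h)) rfl
  have hDG : insert n L ⊆ G := by
    intro m hm
    rcases Finset.mem_insert.mp hm with h | h
    · exact h ▸ hn
    · exact Finset.mem_of_mem_erase (hL h)
  have hDdom : ∀ m ∈ insert n L, Dominant (insert n L) m := by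
    intro m hm
    rcases Finset.mem_insert.mp hm with h | h
    · subst h
      refine ⟨x, m x, lt_of_le_of_lt (Nat.zero_le _) hx, le_rfl, ?_⟩
      intro m' hm' hne
      rcases Finset.mem_insert.mp hm' with h' | h'
      · exact absurd h' hne
      · exact hmx m' h'
    · have hmne : m ≠ n := Finset.ne_of_mem_erase (hL h)
      obtain ⟨y, k, hk, hky, hall⟩ := hdom m (Finset.mem_of_mem_erase (hL h)) hmne
      exact ⟨y, k, hk, hky, fun m' hm' hne => hall m' (hDG hm') hne⟩
  have := hub (insert n L) hDG (Finset.mem_insert_self n L) hDdom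
  rw [Finset.card_insert_of_notMem hnL] at this
  omega
end

section
/- Let G = {m₁, …, m_q, n} be a semidominant set of monomials. Then the largest dominant subset of G containing n has cardinality 2 if and only if for all i ≠ j, n divides lcm(m_i, m_j). -/
open Finset

variable {X : Type*} [DecidableEq X]

lemma dominant_anti {D G : Finset (X →₀ ℕ)} (h : D ⊆ G) {m : X →₀ ℕ}
    (hm : Dominant G m) : Dominant D m := by
  obtain ⟨x, k, hk, hkm, hlt⟩ := hm
  exact ⟨x, k, hk, hkm, fun m' hm' => hlt m' (h hm')⟩

lemma mlcm_pair_apply (a b : X →₀ ℕ) (x : X) :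
    mlcm {a, b} x = max (a x) (b x) := by
  simp [mlcm, Finset.sup_insert, Finset.sup_singleton, Finsupp.sup_apply]

theorem pd_two_iff (G : Finset (X →₀ ℕ)) (n : X →₀ ℕ) (hn : n ∈ G)
    (hnd : ¬ Dominant G n) (hdom : ∀ m ∈ G, m ≠ n → Dominant G m)
    (hmin : ∀ a ∈ G, ∀ b ∈ G, a ≠ b → ¬ a ≤ b)
    (hq : (G.erase n).Nonempty) :
    ((∀ D ⊆ G, n ∈ D → (∀ m ∈ D, Dominant D m) → D.card ≤ 2) ∧
     (∃ D ⊆ G, n ∈ D ∧ (∀ m ∈ D, Dominant D m) ∧ D.card = 2)) ↔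
    (∀ a ∈ G.erase n, ∀ b ∈ G.erase n, a ≠ b → n ≤ mlcm {a, b}) := by
  constructor
  · rintro ⟨hbound, -⟩ a ha b hb hab
    obtain ⟨han, haG⟩ := Finset.mem_erase.mp ha
    obtain ⟨hbn, hbG⟩ := Finset.mem_erase.mp hb
    rw [Finsupp.le_def]
    intro x
    by_contra hx
    push_neg at hx
    rw [mlcm_pair_apply] at hx
    -- hx : max (a x) (b x) < n x
    set D : Finset (X →₀ ℕ) := {a, b, n} with hD
    have hsub : D ⊆ G := by
      intro m hm
      simp only [hD, Finset.mem_insert, Finset.mem_singleton] at hm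
      rcases hm with rfl | rfl | rfl <;> assumption
    have hnD : n ∈ D := by simp [hD]
    have hdomD : ∀ m ∈ D, Dominant D m := by
      intro m hm
      simp only [hD, Finset.mem_insert, Finset.mem_singleton] at hm
      rcases hm with rfl | rfl | rfl
      · exact dominant_anti hsub (hdom m haG han)
      · exact dominant_anti hsub (hdom m hbG hbn)
      · refine ⟨x, m x, ?_, le_refl _, ?_⟩
        · exact lt_of_le_of_lt (Nat.zero_le _) hx
        · intro m' hm' hm'n
          simp only [hD, Finset.mem_insert, Finset.mem_singleton] at hm'
          rcases hm' with rfl | rfl | rfl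
          · exact lt_of_le_of_lt (le_max_left _ _) hx
          · exact lt_of_le_of_lt (le_max_right _ _) hx
          · exact absurd rfl hm'n
    have hcard : D.card = 3 := by
      rw [hD]
      rw [Finset.card_insert_of_notMem (by simp [hab, han]),
        Finset.card_insert_of_notMem (by simp [hbn])]
      simp
    have := hbound D hsub hnD hdomD
    omega
  · intro h
    constructor
    · intro D hsub hnD hdomD
      by_contra h3
      push_neg at h3
      have h2 : 1 < (D.erase n).card := by
        have := Finset.card_erase_of_mem hnD
        omega
      obtain ⟨a, ha, b, hb, hab⟩ := Finset.one_lt_card.mp h2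
      obtain ⟨han, haD⟩ := Finset.mem_erase.mp ha
      obtain ⟨hbn, hbD⟩ := Finset.mem_erase.mp hb
      have haG : a ∈ G.erase n := Finset.mem_erase.mpr ⟨han, hsub haD⟩
      have hbG : b ∈ G.erase n := Finset.mem_erase.mpr ⟨hbn, hsub hbD⟩
      have hle := h a haG b hbG hab
      obtain ⟨x, k, hk, hkn, hlt⟩ := hdomD n hnD
      have h1 := hlt a haD han
      have h2 := hlt b hbD hbn
      have := Finsupp.le_def.mp hle x
      rw [mlcm_pair_apply] at this
      omega
    · obtain ⟨m₁, hm₁⟩ := hq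
      obtain ⟨hm₁n, hm₁G⟩ := Finset.mem_erase.mp hm₁
      refine ⟨{m₁, n}, ?_, by simp, ?_, ?_⟩
      · intro m hm
        simp only [Finset.mem_insert, Finset.mem_singleton] at hm
        rcases hm with rfl | rfl <;> assumption
      · intro m hm
        simp only [Finset.mem_insert, Finset.mem_singleton] at hm
        rcases hm with rfl | rfl
        · have := hmin m hm₁G n hn hm₁n
          rw [Finsupp.le_def] at this
          push_neg at this
          obtain ⟨x, hx⟩ := this
          refine ⟨x, m x, lt_of_le_of_lt (Nat.zero_le _) hx, le_refl _, ?_⟩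
          intro m' hm' hm'm
          simp only [Finset.mem_insert, Finset.mem_singleton] at hm'
          rcases hm' with rfl | rfl
          · exact absurd rfl hm'm
          · exact hx
        · have := hmin m hn m₁ hm₁G (Ne.symm hm₁n)
          rw [Finsupp.le_def] at this
          push_neg at this
          obtain ⟨x, hx⟩ := this
          refine ⟨x, m x, lt_of_le_of_lt (Nat.zero_le _) hx, le_refl _, ?_⟩
          intro m' hm' hm'm
          simp only [Finset.mem_insert, Finset.mem_singleton] at hm'
          rcases hm' with rfl | rfl
          · exact hx
          · exact absurd rfl hm'm
      · exact Finset.card_pair hm₁n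
end

section
/- Let G = {m₁, …, m_q, n₁, n₂} be a 2-semidominant set of monomials (each m_i dominant, n₁ and n₂ nondominant with respect to G). If L₁, L₂ ⊆ G satisfy lcm(L₁) = lcm(L₂) and |L₂| = |L₁| + 1, then L₁ ⊆ L₂ (so L₂ is obtained from L₁ by adding one nondominant element). -/
open Finset

variable {X : Type*} [DecidableEq X]

theorem two_semidominant_consecutive (G : Finset (X →₀ ℕ)) (n₁ n₂ : X →₀ ℕ)
    (h1 : n₁ ∈ G) (h2 : n₂ ∈ G) (hne : n₁ ≠ n₂)
    (hnd1 : ¬ Dominant G n₁) (hnd2 : ¬ Dominant G n₂)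
    (hdom : ∀ m ∈ G, m ≠ n₁ → m ≠ n₂ → Dominant G m)
    (L₁ L₂ : Finset (X →₀ ℕ)) (hL1 : L₁ ⊆ G) (hL2 : L₂ ⊆ G)
    (hlcm : mlcm L₁ = mlcm L₂) (hcard : L₂.card = L₁.card + 1) :
    L₁ ⊆ L₂ := by
  have key : ∀ m, Dominant G m → (m ∈ L₁ ↔ m ∈ L₂) := by
    intro m hd
    obtain ⟨x, k, hk0, hkm, hlt⟩ := hd
    have mem_iff : ∀ L : Finset (X →₀ ℕ), L ⊆ G → (m ∈ L ↔ k ≤ mlcm L x) := by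
      intro L hLG
      rw [mlcm_apply]
      constructor
      · intro hmL
        exact le_trans hkm (Finset.le_sup (f := fun m => m x) hmL)
      · intro hk
        rw [Finset.le_sup_iff (by simpa using hk0)] at hk
        obtain ⟨m', hm'L, hm'k⟩ := hk
        rcases eq_or_ne m' m with rfl | hne'
        · exact hm'L
        · exact absurd hm'k (not_le_of_gt (hlt m' (hLG hm'L) hne'))
    rw [mem_iff L₁ hL1, mem_iff L₂ hL2, hlcm]
  have hsub1 : L₁ \ L₂ ⊆ {n₁, n₂} := by
    intro m hm
    simp only [Finset.mem_sdiff] at hm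
    by_contra hmem
    simp only [Finset.mem_insert, Finset.mem_singleton, not_or] at hmem
    exact hm.2 ((key m (hdom m (hL1 hm.1) hmem.1 hmem.2)).mp hm.1)
  have hsub2 : L₂ \ L₁ ⊆ {n₁, n₂} := by
    intro m hm
    simp only [Finset.mem_sdiff] at hm
    by_contra hmem
    simp only [Finset.mem_insert, Finset.mem_singleton, not_or] at hmem
    exact hm.2 ((key m (hdom m (hL2 hm.1) hmem.1 hmem.2)).mpr hm.1)
  have e1 : (L₁ \ L₂).card + (L₁ ∩ L₂).card = L₁.card :=
    Finset.card_sdiff_add_card_inter L₁ L₂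
  have e2 : (L₂ \ L₁).card + (L₂ ∩ L₁).card = L₂.card :=
    Finset.card_sdiff_add_card_inter L₂ L₁
  rw [Finset.inter_comm] at e2
  have hcard2 : (L₂ \ L₁).card = (L₁ \ L₂).card + 1 := by omega
  intro m hm
  by_contra hm2
  have hm12 : m ∈ L₁ \ L₂ := Finset.mem_sdiff.mpr ⟨hm, hm2⟩
  have c1 : 1 ≤ (L₁ \ L₂).card := Finset.card_pos.mpr ⟨m, hm12⟩
  have hdisj : Disjoint (L₁ \ L₂) (L₂ \ L₁) := disjoint_sdiff_sdiff
  have hunion : (L₁ \ L₂) ∪ (L₂ \ L₁) ⊆ {n₁, n₂} := Finset.union_subset hsub1 hsub2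
  have := Finset.card_le_card hunion
  rw [Finset.card_union_of_disjoint hdisj] at this
  have h2 : ({n₁, n₂} : Finset (X →₀ ℕ)).card ≤ 2 := Finset.card_insert_le _ _ |>.trans (by simp)
  omega
end

section
/- Let G = {m₁, …, m_q, n₁, n₂} be a 2-semidominant set of monomials, and suppose no variable appears with the same nonzero exponent in n₁ and n₂. Then for every σ ⊆ {m₁,…,m_q}, it is not the case that lcm(σ ∪ {n₁}) = lcm(σ ∪ {n₂}) while n₁ does not divide lcm(σ). Equivalently, if lcm(σ ∪ {n₁}) = lcm(σ ∪ {n₂}), then n₁ divides lcm(σ) and n₂ divides lcm(σ). -/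
open Finset

variable {X : Type*} [DecidableEq X]

theorem two_semidominant_generic_scarf (G : Finset (X →₀ ℕ)) (n₁ n₂ : X →₀ ℕ)
    (h1 : n₁ ∈ G) (h2 : n₂ ∈ G) (hne : n₁ ≠ n₂)
    (hnd1 : ¬ Dominant G n₁) (hnd2 : ¬ Dominant G n₂)
    (hdom : ∀ m ∈ G, m ≠ n₁ → m ≠ n₂ → Dominant G m)
    (hexp : ∀ x : X, n₁ x = n₂ x → n₁ x = 0) :
    ∀ σ ⊆ (G.erase n₁).erase n₂,
      mlcm (insert n₁ σ) = mlcm (insert n₂ σ) →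
      n₁ ≤ mlcm σ ∧ n₂ ≤ mlcm σ := by
  intro σ hσ heq
  have hL : ∀ x, max (n₁ x) (mlcm σ x) = max (n₂ x) (mlcm σ x) := by
    intro x
    have h := congrArg (fun f : X →₀ ℕ => f x) heq
    simpa [mlcm, Finset.sup_insert, Finsupp.sup_apply] using h
  have key : ∀ x, n₁ x ≤ mlcm σ x ∧ n₂ x ≤ mlcm σ x := by
    intro x
    have h := hL x
    by_cases hab : n₁ x = n₂ x
    · have h0 := hexp x hab
      omega
    · omega
  exact ⟨Finsupp.le_def.mpr fun x => (key x).1,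
    Finsupp.le_def.mpr fun x => (key x).2⟩
end

section
/- Let G = {m₁, …, m_q, n₁, n₂} be a 2-semidominant set of monomials such that for every monomial multidegree m, the number of subsets L ⊆ G with lcm(L) = m that is shared by more than one subset is even. Then both n₁ and n₂ divide lcm(m₁, …, m_q). -/
open Finset
variable {X : Type*} [DecidableEq X]
lemma mlcm_mono {L M : Finset (X →₀ ℕ)} (h : L ⊆ M) : mlcm L ≤ mlcm M :=
  Finset.sup_mono h

lemma le_mlcm {L : Finset (X →₀ ℕ)} {m : X →₀ ℕ} (h : m ∈ L) : m ≤ mlcm L :=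
  Finset.le_sup (f := id) h

lemma mlcm_insert (a : X →₀ ℕ) (L : Finset (X →₀ ℕ)) :
    mlcm (insert a L) = a ⊔ mlcm L := Finset.sup_insert

lemma nondominant_le {G : Finset (X →₀ ℕ)} {n : X →₀ ℕ} (hn : n ∈ G)
    (h : ¬ Dominant G n) : n ≤ mlcm (G.erase n) := by
  simp only [Dominant, not_exists] at h
  intro x
  rcases Nat.eq_zero_or_pos (n x) with h0 | h0
  · simp [h0]
  · have := h x (n x)
    push_neg at this
    obtain ⟨m', hm'G, hm'ne, hle⟩ := this h0 le_rfl
    calc n x ≤ m' x := hle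
    _ ≤ mlcm (G.erase n) x := by
        rw [mlcm_apply]
        exact Finset.le_sup (f := fun m => m x) (Finset.mem_erase.mpr ⟨hm'ne, hm'G⟩)

lemma dominant_mem {G L : Finset (X →₀ ℕ)} {m : X →₀ ℕ} (hm : m ∈ G)
    (hd : Dominant G m) (hL : L ⊆ G) (he : mlcm L = mlcm G) : m ∈ L := by
  obtain ⟨x, k, hk, hkm, hdom⟩ := hd
  have h1 : k ≤ L.sup (fun m => m x) := by
    rw [← mlcm_apply, he, mlcm_apply]
    exact hkm.trans (Finset.le_sup (f := fun m => m x) hm)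
  rw [Finset.le_sup_iff (show (⊥:ℕ) < k from hk)] at h1
  obtain ⟨b, hbL, hbk⟩ := h1
  by_contra hmL
  have hbne : b ≠ m := fun h => hmL (h ▸ hbL)
  exact absurd hbk (not_le.mpr (hdom b (hL hbL) hbne))

theorem scarf_implies_divides (G : Finset (X →₀ ℕ)) (n₁ n₂ : X →₀ ℕ)
    (h1 : n₁ ∈ G) (h2 : n₂ ∈ G) (hne : n₁ ≠ n₂)
    (hnd1 : ¬ Dominant G n₁) (hnd2 : ¬ Dominant G n₂)
    (hdom : ∀ m ∈ G, m ≠ n₁ → m ≠ n₂ → Dominant G m)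
    (heven : ∀ m : X →₀ ℕ,
      2 ≤ (G.powerset.filter (fun L => mlcm L = m)).card →
      Even ((G.powerset.filter (fun L => mlcm L = m)).card)) :
    n₁ ≤ mlcm ((G.erase n₁).erase n₂) ∧ n₂ ≤ mlcm ((G.erase n₁).erase n₂) := by
  classical
  set A : Finset (X →₀ ℕ) := (G.erase n₁).erase n₂ with hA
  have hn1A : n₁ ∉ A := by simp [hA]
  have hn2A : n₂ ∉ A := by simp [hA]
  have hins2 : insert n₂ A = G.erase n₁ :=
    Finset.insert_erase (Finset.mem_erase.mpr ⟨fun h => hne h.symm, h2⟩)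
  have hins1 : insert n₁ A = G.erase n₂ := by
    have : A = (G.erase n₂).erase n₁ := by
      ext m; simp [hA, and_comm, and_left_comm]
    rw [this]
    exact Finset.insert_erase (Finset.mem_erase.mpr ⟨hne, h1⟩)
  have hGeq : G = insert n₁ (insert n₂ A) := by
    rw [hins2, Finset.insert_erase h1]
  set D : X →₀ ℕ := mlcm A with hD
  have h12 : n₁ ≤ n₂ ⊔ D := by
    have := nondominant_le h1 hnd1
    rwa [← hins2, mlcm_insert] at this
  have h21 : n₂ ≤ n₁ ⊔ D := by
    have := nondominant_le h2 hnd2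
    rwa [← hins1, mlcm_insert] at this
  set E : X →₀ ℕ := mlcm G with hE
  have hEeq : E = n₁ ⊔ (n₂ ⊔ D) := by rw [hE, hGeq, mlcm_insert, mlcm_insert]
  have hL1 : mlcm (insert n₁ A) = E := by
    refine le_antisymm (mlcm_mono (by rw [hins1]; exact Finset.erase_subset _ _)) ?_
    rw [hEeq, mlcm_insert]
    exact sup_le le_sup_left (sup_le h21 le_sup_right)
  have hL2 : mlcm (insert n₂ A) = E := by
    refine le_antisymm (mlcm_mono (by rw [hins2]; exact Finset.erase_subset _ _)) ?_
    rw [hEeq, mlcm_insert]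
    exact sup_le h12 le_rfl
  set S : Finset (Finset (X →₀ ℕ)) := G.powerset.filter (fun L => mlcm L = E) with hS
  have hmemS : ∀ L, L ∈ S ↔ L ⊆ G ∧ mlcm L = E := by
    intro L; simp [hS, Finset.mem_filter, Finset.mem_powerset]
  have hsub : ∀ L ∈ S, L = A ∨ L = insert n₁ A ∨ L = insert n₂ A ∨ L = G := by
    intro L hL
    obtain ⟨hLG, hLE⟩ := (hmemS L).mp hL
    have hAL : A ⊆ L := by
      intro m hm
      have hm2 : m ≠ n₂ := (Finset.mem_erase.mp hm).1
      have hm1 : m ≠ n₁ := (Finset.mem_erase.mp (Finset.mem_of_mem_erase hm)).1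
      have hmG : m ∈ G := Finset.mem_of_mem_erase (Finset.mem_of_mem_erase hm)
      exact dominant_mem hmG (hdom m hmG hm1 hm2) hLG hLE
    by_cases e1 : n₁ ∈ L <;> by_cases e2 : n₂ ∈ L
    · right; right; right
      refine Finset.Subset.antisymm hLG ?_
      rw [hGeq]
      exact Finset.insert_subset e1 (Finset.insert_subset e2 hAL)
    · right; left
      refine Finset.Subset.antisymm ?_ (Finset.insert_subset e1 hAL)
      intro m hm
      have hmem := hLG hm
      rw [hGeq] at hmem
      rcases Finset.mem_insert.mp hmem with h | h
      · exact Finset.mem_insert.mpr (Or.inl h)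
      · rcases Finset.mem_insert.mp h with h' | h'
        · exact absurd (h' ▸ hm) e2
        · exact Finset.mem_insert.mpr (Or.inr h')
    · right; right; left
      refine Finset.Subset.antisymm ?_ (Finset.insert_subset e2 hAL)
      intro m hm
      have hmem := hLG hm
      rw [hGeq] at hmem
      rcases Finset.mem_insert.mp hmem with h | h
      · exact absurd (h ▸ hm) e1
      · exact h
    · left
      refine Finset.Subset.antisymm ?_ hAL
      intro m hm
      have hmem := hLG hm
      rw [hGeq] at hmem
      rcases Finset.mem_insert.mp hmem with h | h
      · exact absurd (h ▸ hm) e1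
      · rcases Finset.mem_insert.mp h with h' | h'
        · exact absurd (h' ▸ hm) e2
        · exact h'
  have hL1S : insert n₁ A ∈ S := (hmemS _).mpr
    ⟨by rw [hins1]; exact Finset.erase_subset _ _, hL1⟩
  have hL2S : insert n₂ A ∈ S := (hmemS _).mpr
    ⟨by rw [hins2]; exact Finset.erase_subset _ _, hL2⟩
  have hGS : G ∈ S := (hmemS _).mpr ⟨Finset.Subset.refl _, rfl⟩
  have hd12 : insert n₁ A ≠ insert n₂ A := by
    intro h
    have : n₁ ∈ insert n₂ A := h ▸ Finset.mem_insert_self n₁ A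
    rcases Finset.mem_insert.mp this with h' | h'
    · exact hne h'
    · exact hn1A h'
  have hd1G : insert n₁ A ≠ G := by
    intro h
    have : n₂ ∈ insert n₁ A := h ▸ h2
    rcases Finset.mem_insert.mp this with h' | h'
    · exact hne h'.symm
    · exact hn2A h'
  have hd2G : insert n₂ A ≠ G := by
    intro h
    have : n₁ ∈ insert n₂ A := h ▸ h1
    rcases Finset.mem_insert.mp this with h' | h'
    · exact hne h'
    · exact hn1A h'
  have hAS : A ∈ S := by
    by_contra hAS
    have hSeq : S = {insert n₁ A, insert n₂ A, G} := by
      apply Finset.Subset.antisymm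
      · intro L hL
        rcases hsub L hL with h | h | h | h
        · exact absurd (h ▸ hL) hAS
        · simp [h]
        · simp [h]
        · simp [h]
      · intro L hL
        simp only [Finset.mem_insert, Finset.mem_singleton] at hL
        rcases hL with h | h | h <;> rw [h] <;> assumption
    have hcard : S.card = 3 := by
      rw [hSeq]
      rw [Finset.card_insert_of_notMem (by simp [hd12, hd1G]),
          Finset.card_insert_of_notMem (by simp [hd2G]), Finset.card_singleton]
    have := heven E (by rw [← hS]; omega)
    rw [← hS, hcard] at this
    exact (by decide : ¬ Even 3) this
  have hAE : mlcm A = E := ((hmemS A).mp hAS).2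
  constructor
  · calc n₁ ≤ E := hEeq ▸ le_sup_left
    _ = mlcm A := hAE.symm
  · calc n₂ ≤ E := hEeq ▸ le_trans le_sup_left le_sup_right
    _ = mlcm A := hAE.symm
end

section
/- Let G be a finite set of monomials, no one dividing another, such that every element of G is dominant with respect to G. Then for any two distinct subsets L₁ ≠ L₂ of G, lcm(L₁) ≠ lcm(L₂); in particular the number of distinct values of lcm over subsets of G is exactly 2^|G|. -/
open Finset

variable {X : Type*} [DecidableEq X]

theorem lcm_lattice_boolean (G : Finset (X →₀ ℕ))
    (hmin : ∀ a ∈ G, ∀ b ∈ G, a ≠ b → ¬ a ≤ b)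
    (hdom : ∀ m ∈ G, Dominant G m) :
    (∀ L₁ ⊆ G, ∀ L₂ ⊆ G, L₁ ≠ L₂ → mlcm L₁ ≠ mlcm L₂) ∧
    (G.powerset.image mlcm).card = 2 ^ G.card := by
  have key : ∀ L₁ ⊆ G, ∀ L₂ ⊆ G, ∀ m ∈ L₁, m ∉ L₂ → mlcm L₁ ≠ mlcm L₂ := by
    intro L₁ hL₁ L₂ hL₂ m hm1 hm2 heq
    obtain ⟨x, k, hk0, hkm, hlt⟩ := hdom m (hL₁ hm1)
    have h1 : k ≤ mlcm L₁ x :=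
      le_trans hkm ((Finset.le_sup (f := id) hm1 : m ≤ mlcm L₁) x)
    have h2 : mlcm L₂ x < k := by
      have hx : mlcm L₂ x = L₂.sup (fun m' => m' x) :=
        Finset.comp_sup_eq_sup_comp (fun g : X →₀ ℕ => g x)
          (fun a b => Finsupp.sup_apply a b x) rfl
      rw [hx]
      refine (Finset.sup_lt_iff (by simpa using hk0)).mpr ?_
      intro m' hm'
      exact hlt m' (hL₂ hm') (fun h => hm2 (h ▸ hm'))
    rw [heq] at h1
    omega
  have inj : ∀ L₁ ⊆ G, ∀ L₂ ⊆ G, L₁ ≠ L₂ → mlcm L₁ ≠ mlcm L₂ := by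
    intro L₁ hL₁ L₂ hL₂ hne
    by_cases hs : L₁ ⊆ L₂
    · obtain ⟨m, hm2, hm1⟩ := Finset.not_subset.mp
        (fun h => hne (Finset.Subset.antisymm hs h))
      exact (key L₂ hL₂ L₁ hL₁ m hm2 hm1).symm ∘ Eq.symm ∘ Eq.symm
    · obtain ⟨m, hm1, hm2⟩ := Finset.not_subset.mp hs
      exact key L₁ hL₁ L₂ hL₂ m hm1 hm2
  refine ⟨inj, ?_⟩
  rw [Finset.card_image_of_injOn, Finset.card_powerset]
  intro L₁ h1 L₂ h2 heq
  by_contra hne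
  exact inj L₁ (Finset.mem_powerset.mp h1) L₂ (Finset.mem_powerset.mp h2) hne heq
end

section
/- Let G = {m₁, …, m_q, n} be a semidominant set of monomials, and let r be the maximal cardinality of a dominant subset of G containing n. For any subset σ ⊆ G with |σ| > r: if n ∉ σ then n divides lcm(σ), and if n ∈ σ then n divides lcm(σ \ {n}). -/
open Finset

variable {X : Type*} [DecidableEq X]

theorem semidominant_above_pd (G : Finset (X →₀ ℕ)) (n : X →₀ ℕ) (hn : n ∈ G)
    (hnd : ¬ Dominant G n) (hdom : ∀ m ∈ G, m ≠ n → Dominant G m)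
    (r : ℕ)
    (hub : ∀ D ⊆ G, n ∈ D → (∀ m ∈ D, Dominant D m) → D.card ≤ r)
    (hmax : ∃ D ⊆ G, n ∈ D ∧ (∀ m ∈ D, Dominant D m) ∧ D.card = r) :
    ∀ σ ⊆ G, r < σ.card →
      (n ∉ σ → n ≤ mlcm σ) ∧ (n ∈ σ → n ≤ mlcm (σ.erase n)) := by
  obtain ⟨D, hDG, hnD, hDdom, hDcard⟩ := hmax
  have hr1 : 1 ≤ r := hDcard ▸ Finset.card_pos.2 ⟨n, hnD⟩
  intro σ hσG hσcard
  have key : ∀ τ ⊆ G, n ∉ τ → r ≤ τ.card → n ≤ mlcm τ := by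
    intro τ hτG hnτ hτcard
    by_contra h
    rw [Finsupp.le_def] at h
    push_neg at h
    obtain ⟨x, hx⟩ := h
    have hlt : ∀ m ∈ τ, m x < n x := fun m hm =>
      lt_of_le_of_lt (Finsupp.le_def.mp (Finset.le_sup (f := id) hm) x) hx
    have hins : insert n τ ⊆ G := Finset.insert_subset hn hτG
    have hdomall : ∀ m ∈ insert n τ, Dominant (insert n τ) m := by
      intro m hm
      rcases Finset.mem_insert.mp hm with rfl | hmτ
      · refine ⟨x, m x, ?_, le_rfl, ?_⟩
        · obtain ⟨m', hm'⟩ := Finset.card_pos.mp (by omega : 0 < τ.card)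
          exact lt_of_le_of_lt (Nat.zero_le _) (hlt m' hm')
        · intro m' hm' hne
          rcases Finset.mem_insert.mp hm' with rfl | h'
          · exact absurd rfl hne
          · exact hlt m' h'
      · obtain ⟨y, k, hk, hkm, hall⟩ :=
          hdom m (hτG hmτ) (fun e => hnτ (e ▸ hmτ))
        exact ⟨y, k, hk, hkm, fun m' hm' hne => hall m' (hins hm') hne⟩
    have h1 := hub (insert n τ) hins (Finset.mem_insert_self n τ) hdomall
    have h2 : τ.card < (insert n τ).card := by
      rw [Finset.card_insert_of_notMem hnτ]; omega
    omega
  refine ⟨fun hn' => key σ hσG hn' (le_of_lt hσcard),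
    fun hn' => key (σ.erase n) ((Finset.erase_subset _ _).trans hσG)
      (Finset.notMem_erase _ _) ?_⟩
  rw [Finset.card_erase_of_mem hn']; omega
end
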